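/- Let (n_i)_{i≥1} be a sequence of positive integers with n_1 ≥ 2, and over the alphabet {a,b} define u_0 = ε (the empty word) and u_i = u_{i-1} a (u_{i-1} b)^{n_i} u_{i-1} for i ≥ 1; let U = lim_{i→∞} u_i be the infinite word having every u_i as a prefix. Then U is uniformly recurrent; more precisely, every factor z of U whose first occurrence lies within the prefix u_i has maximal return time at most |u_i| + 1. -/

import Mathlib

open scoped BigOperators ENNReal

namespace PeriodicityComplexity

variable {A : Type*}

/-- The finite word `z` occurs in the infinite word `w` at the (0-based) index `j`,
i.e. `z` occupies positions `j+1, …, j+|z|` of `w`. -/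
def OccursAt (w : ℕ → A) (z : List A) (j : ℕ) : Prop :=
  z = List.ofFn (fun t : Fin z.length => w (j + t))

/-- `z` is a (finite) factor of the infinite word `w`. -/
def IsFactor (w : ℕ → A) (z : List A) : Prop := ∃ j, OccursAt w z j

/-- An infinite word is uniformly recurrent if every factor occurs with bounded gaps. -/
def UniformlyRecurrent (w : ℕ → A) : Prop :=
  ∀ z : List A, IsFactor w z → ∃ N : ℕ, ∀ j : ℕ, ∃ t, j ≤ t ∧ t < j + N ∧ OccursAt w z t

/-- An infinite word is periodic if some `p ≥ 1` is a period of all of it. -/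
def Periodic (w : ℕ → A) : Prop := ∃ p : ℕ, 1 ≤ p ∧ ∀ i, w (i + p) = w i

/-- An infinite word is ultimately periodic if some `p ≥ 1` is a period from some point on. -/
def UltimatelyPeriodic (w : ℕ → A) : Prop :=
  ∃ p : ℕ, 1 ≤ p ∧ ∃ N : ℕ, ∀ i, N ≤ i → w (i + p) = w i

/-- The `e`-fold concatenation `v^e` of a finite word `v`. -/
def wpow (v : List A) (e : ℕ) : List A := (List.replicate e v).flatten

/-- The prefix of length `i` of an infinite word. -/
def wordPrefix (w : ℕ → A) (i : ℕ) : List A := List.ofFn (fun t : Fin i => w t)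

/-- `r` is a repetition word at position `i` of the infinite word `w` (`w = uv`, `|u| = i`):
`r` is nonempty, suffix-comparable with `u`, and a prefix of the infinite remainder `v`. -/
def IsRepWordAt (w : ℕ → A) (i : ℕ) (r : List A) : Prop :=
  r ≠ [] ∧ (r <:+ wordPrefix w i ∨ wordPrefix w i <:+ r) ∧ OccursAt w r i

/-- Local period of an infinite word at position `i`, as an extended nonnegative real
(`⊤` if there is no repetition word at that position). -/
noncomputable def localPeriod (w : ℕ → A) (i : ℕ) : ℝ≥0∞ :=
  sInf ((fun r : List A => (r.length : ℝ≥0∞)) '' {r | IsRepWordAt w i r})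

/-- Periodicity complexity `h_w(i) = (1/i) ∑_{j=1}^{i} p_w(j)` of an infinite word. -/
noncomputable def pcomplexity (w : ℕ → A) (i : ℕ) : ℝ≥0∞ :=
  (∑ j ∈ Finset.Icc 1 i, localPeriod w j) / (i : ℝ≥0∞)

/-- `r` is a repetition word at position `i` of the finite word `v` (`v = xy`, `|x| = i`):
`r` is nonempty, suffix-comparable with `x` and prefix-comparable with `y`. -/
def IsRepWordAtF (v : List A) (i : ℕ) (r : List A) : Prop :=
  r ≠ [] ∧ (r <:+ v.take i ∨ v.take i <:+ r) ∧ (r <+: v.drop i ∨ v.drop i <+: r)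

/-- Local period of a finite word at position `i`. -/
noncomputable def localPeriodF (v : List A) (i : ℕ) : ℕ :=
  sInf {n : ℕ | ∃ r : List A, IsRepWordAtF v i r ∧ r.length = n}

/-- Average local period `h(v) = (1/|v|) ∑_{i=1}^{|v|} p_v(i)` of a finite word. -/
noncomputable def hF (v : List A) : ℝ :=
  (∑ i ∈ Finset.Icc 1 v.length, (localPeriodF v i : ℝ)) / (v.length : ℝ)

/-- An infinite word is of bounded repetition if the exponents of powers of nonempty
words occurring in it are bounded. -/
def BoundedRepetition (w : ℕ → A) : Prop :=
  ∃ E : ℕ, ∀ (v : List A) (e : ℕ), v ≠ [] → IsFactor w (wpow v e) → e ≤ E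

/-- `p` is a period of the finite word `z`. -/
def HasPeriodF (z : List A) (p : ℕ) : Prop :=
  ∀ t : ℕ, t + p < z.length → z[t]? = z[t + p]?

/-- The (least) period of a finite word. -/
noncomputable def periodF (z : List A) : ℕ := sInf {p : ℕ | 1 ≤ p ∧ HasPeriodF z p}

/-- `r` is a return word to `z` in the infinite word `w`: `r` is the factor of `w` between
two consecutive occurrences of `z`. -/
def IsReturnWord (w : ℕ → A) (z r : List A) : Prop :=
  r ≠ [] ∧ ∃ j : ℕ, OccursAt w z j ∧ OccursAt w z (j + r.length) ∧
    (∀ t, j < t → t < j + r.length → ¬ OccursAt w z t) ∧ OccursAt w r j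

/-- `l` is the length of some return word to `z` in `w`. -/
def IsReturnLength (w : ℕ → A) (z : List A) (l : ℕ) : Prop :=
  ∃ r : List A, IsReturnWord w z r ∧ r.length = l

/-- The maximal return time of `z` in `w`. -/
noncomputable def maxReturnTime (w : ℕ → A) (z : List A) : ℕ :=
  sSup {l : ℕ | IsReturnLength w z l}

/-- A finite word is unbordered if no proper nonempty prefix of it is also a suffix. -/
def Unbordered (z : List A) : Prop :=
  ∀ b : List A, b ≠ [] → b.length < z.length → b <+: z → ¬ b <:+ z

/-- A finite word is primitive if it is not a (trivial or nontrivial) power of a word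
other than itself. -/
def Primitive (z : List A) : Prop :=
  ∀ (v : List A) (k : ℕ), z = wpow v k → k = 1

/-- A finite word is Lyndon if it is primitive and lexicographically minimal among its
conjugates: `z ≤ yx` for every factorization `z = xy`. -/
def IsLyndon [LinearOrder A] (z : List A) : Prop :=
  Primitive z ∧ ∀ x y : List A, z = x ++ y → z ≤ y ++ x

end PeriodicityComplexity

namespace PeriodicityComplexity

variable {A : Type*}

/-- The words `u_0 = ε`, `u_i = u_{i-1} a (u_{i-1} b)^{n_i} u_{i-1}` of the generalized
Toeplitz construction. -/
def uSeq (a b : A) (nseq : ℕ → ℕ) : ℕ → List A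
  | 0 => []
  | i + 1 =>
      uSeq a b nseq i ++ [a] ++ wpow (uSeq a b nseq i ++ [b]) (nseq (i + 1)) ++ uSeq a b nseq i

lemma occursAt_iff {w : ℕ → A} {z : List A} {j : ℕ} :
    OccursAt w z j ↔ ∀ t (ht : t < z.length), z[t] = w (j + t) := by
  constructor
  · intro h t ht
    conv_lhs => rw [List.getElem_of_eq h ht]
    simp
  · intro h
    apply List.ext_getElem (by simp)
    intro i h1 h2
    simpa using h i h1

lemma OccursAt.append_left {w : ℕ → A} {x y : List A} {j : ℕ}
    (h : OccursAt w (x ++ y) j) : OccursAt w x j := by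
  rw [occursAt_iff] at h ⊢
  intro t ht
  have := h t (by simp; omega)
  rwa [List.getElem_append_left ht] at this

lemma OccursAt.append_right {w : ℕ → A} {x y : List A} {j : ℕ}
    (h : OccursAt w (x ++ y) j) : OccursAt w y (j + x.length) := by
  rw [occursAt_iff] at h ⊢
  intro t ht
  have := h (x.length + t) (by simp; omega)
  rw [List.getElem_append_right (by omega)] at this
  simpa [Nat.add_assoc, Nat.add_comm t] using this

lemma OccursAt.of_prefix {w : ℕ → A} {x y : List A} {j : ℕ}
    (hp : x <+: y) (h : OccursAt w y j) : OccursAt w x j := by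
  obtain ⟨t, rfl⟩ := hp
  exact h.append_left

lemma wpow_succ (v : List A) (n : ℕ) : wpow v (n + 1) = v ++ wpow v n := by
  simp [wpow, List.replicate_succ]

lemma wpow_map_flatten (f : A → List A) (ds : List A) (n : ℕ) :
    wpow ((ds.map f).flatten) n = ((wpow ds n).map f).flatten := by
  induction n with
  | zero => simp [wpow]
  | succ n ih => simp [wpow_succ, ih]

lemma uSeq_blocks (a b : A) (ns : ℕ → ℕ) (i : ℕ) : ∀ j, i ≤ j →
    ∃ cs : List A, uSeq a b ns j
      = (cs.map (fun c => uSeq a b ns i ++ [c])).flatten ++ uSeq a b ns i := by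
  intro j
  induction j with
  | zero => intro hij; exact ⟨[], by simpa using (Nat.le_zero.mp hij ▸ rfl)⟩
  | succ j ih =>
    intro hij
    rcases Nat.eq_or_lt_of_le hij with h | h
    · exact ⟨[], by simp [h]⟩
    · obtain ⟨cs, hcs⟩ := ih (by omega)
      refine ⟨cs ++ [a] ++ wpow (cs ++ [b]) (ns (j + 1)) ++ cs, ?_⟩
      have key : uSeq a b ns j ++ [b] = ((cs ++ [b]).map (fun c => uSeq a b ns i ++ [c])).flatten := by
        simp [hcs, List.append_assoc]
      show uSeq a b ns (j+1) = _
      rw [uSeq]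
      rw [key, wpow_map_flatten]
      simp [hcs, List.append_assoc]

lemma uSeq_length_lt (a b : A) (ns : ℕ → ℕ) (i : ℕ) :
    (uSeq a b ns i).length < (uSeq a b ns (i + 1)).length := by
  rw [uSeq]
  simp

lemma uSeq_length_ge (a b : A) (ns : ℕ → ℕ) (i : ℕ) : i ≤ (uSeq a b ns i).length := by
  induction i with
  | zero => simp
  | succ i ih => have := uSeq_length_lt a b ns i; omega

lemma flatten_blocks_length (a b : A) (ns : ℕ → ℕ) (i : ℕ) (cs : List A) :
    ((cs.map (fun c => uSeq a b ns i ++ [c])).flatten).length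
      = cs.length * ((uSeq a b ns i).length + 1) := by
  induction cs with
  | nil => simp
  | cons c cs ih => simp [ih, Nat.succ_mul]; omega

lemma occ_ui {a b : A} {ns : ℕ → ℕ} {U : ℕ → A}
    (hU : ∀ i : ℕ, OccursAt U (uSeq a b ns i) 0) (i m : ℕ) :
    OccursAt U (uSeq a b ns i) (m * ((uSeq a b ns i).length + 1)) := by
  set L := (uSeq a b ns i).length + 1 with hL
  set f : A → List A := fun c => uSeq a b ns i ++ [c] with hf
  obtain ⟨cs, hcs⟩ := uSeq_blocks a b ns i (i + m * L) (by omega)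
  have h1 : i + m * L ≤ (uSeq a b ns (i + m * L)).length := uSeq_length_ge a b ns _
  have h2 : (uSeq a b ns (i + m * L)).length = cs.length * L + (uSeq a b ns i).length := by
    rw [hcs, List.length_append, flatten_blocks_length]
  have hlen : m ≤ cs.length := by
    by_contra h
    push_neg at h
    have h3 : (cs.length + 1) * L ≤ m * L := Nat.mul_le_mul_right L h
    have h4 : (cs.length + 1) * L = cs.length * L + L := by ring
    omega
  have hsplit : uSeq a b ns (i + m * L)
      = ((cs.take m).map f).flatten
        ++ (((cs.drop m).map f).flatten ++ uSeq a b ns i) := by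
    rw [hcs]
    conv_lhs => rw [← List.take_append_drop m cs]
    rw [List.map_append, List.flatten_append, List.append_assoc]
  have h0 := hU (i + m * L)
  rw [hsplit] at h0
  have h5 := h0.append_right
  have h6 : (((cs.take m).map f).flatten).length = m * L := by
    rw [flatten_blocks_length]
    congr 1
    exact List.length_take_of_le hlen
  rw [h6, Nat.zero_add] at h5
  have hpre : uSeq a b ns i <+: (((cs.drop m).map f).flatten ++ uSeq a b ns i) := by
    rcases hd : cs.drop m with _ | ⟨c, rest⟩
    · simp
    · refine List.IsPrefix.trans ?_ (List.prefix_append _ _)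
      simp [hf]
  exact OccursAt.of_prefix hpre h5

lemma occ_factor {a b : A} {ns : ℕ → ℕ} {U : ℕ → A}
    (hU : ∀ i : ℕ, OccursAt U (uSeq a b ns i) 0) {i : ℕ} {z : List A}
    (hz : z <:+: uSeq a b ns i) :
    ∃ s, s < (uSeq a b ns i).length + 1 ∧
      ∀ m, OccursAt U z (m * ((uSeq a b ns i).length + 1) + s) := by
  obtain ⟨p, q, hpq⟩ := hz
  refine ⟨p.length, ?_, fun m => ?_⟩
  · have := congrArg List.length hpq
    simp at this
    omega
  · have hpq' : p ++ (z ++ q) = uSeq a b ns i := by rw [← List.append_assoc]; exact hpq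
    have h : OccursAt U (p ++ (z ++ q)) (m * ((uSeq a b ns i).length + 1)) := by
      rw [hpq']; exact occ_ui hU i m
    exact h.append_right.append_left

lemma exists_window {L s : ℕ} (hs : s < L) (j : ℕ) :
    ∃ m, j ≤ m * L + s ∧ m * L + s < j + L := by
  induction j with
  | zero => exact ⟨0, by omega, by simp [Nat.zero_mul]; omega⟩
  | succ j ih =>
    obtain ⟨m, h1, h2⟩ := ih
    rcases Nat.lt_or_ge j (m * L + s) with h | h
    · exact ⟨m, h, by omega⟩
    · have h4 : (m + 1) * L = m * L + L := by ring
      exact ⟨m + 1, by omega, by omega⟩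

lemma infix_of_occursAt {U : ℕ → A} {v z : List A} {j : ℕ}
    (hv : OccursAt U v 0) (hz : OccursAt U z j) (hle : j + z.length ≤ v.length) :
    z <:+: v := by
  have heq : z = (v.drop j).take z.length := by
    apply List.ext_getElem (by simp; omega)
    intro t h1 h2
    rw [List.getElem_take, List.getElem_drop]
    rw [occursAt_iff] at hv hz
    rw [hz t h1, hv (j + t) (by omega), Nat.zero_add]
  rw [heq]
  exact ((v.drop j).take_prefix z.length).isInfix.trans (v.drop_suffix j).isInfix

end PeriodicityComplexity

open PeriodicityComplexity

/-- Let `(n_i)` be positive integers with `n_1 ≥ 2` and let `U` be the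
infinite word having every `u_i` (where `u_0 = ε`, `u_i = u_{i-1} a (u_{i-1} b)^{n_i} u_{i-1}`)
as a prefix. Then `U` is uniformly recurrent; more precisely, every factor `z` of the prefix
`u_i` has maximal return time at most `|u_i| + 1`. -/
theorem toeplitz_uniformly_recurrent
    {A : Type*} (a b : A) (hab : a ≠ b)
    (nseq : ℕ → ℕ) (hpos : ∀ i, 1 ≤ i → 1 ≤ nseq i) (hn1 : 2 ≤ nseq 1)
    (U : ℕ → A) (hU : ∀ i : ℕ, OccursAt U (uSeq a b nseq i) 0) :
    UniformlyRecurrent U ∧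
    ∀ (i : ℕ) (z : List A), z <:+: uSeq a b nseq i →
      ∀ l : ℕ, IsReturnLength U z l → l ≤ (uSeq a b nseq i).length + 1 := by
  constructor
  · rintro z ⟨j0, hz⟩
    have hinf : z <:+: uSeq a b nseq (j0 + z.length) :=
      infix_of_occursAt (hU _) hz (uSeq_length_ge a b nseq _)
    obtain ⟨s, hs, hocc⟩ := occ_factor hU hinf
    refine ⟨(uSeq a b nseq (j0 + z.length)).length + 1, fun j => ?_⟩
    obtain ⟨m, h1, h2⟩ := exists_window hs j
    exact ⟨_, h1, h2, hocc m⟩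
  · rintro i z hinf l ⟨r, ⟨hrne, j, hocc1, hocc2, hbetween, -⟩, hrl⟩
    obtain ⟨s, hs, hocc⟩ := occ_factor hU hinf
    by_contra h
    push_neg at h
    obtain ⟨m, h1, h2⟩ := exists_window hs (j + 1)
    exact hbetween _ (by omega) (by omega) (hocc m)
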